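/- Let C be a symmetric n×n rational matrix and H an n×k rational matrix. Let X ∈ ℤⁿ range over a finite box [1,N]ⁿ. Then the number of pairs (x,y) ∈ ([1,N]ⁿ)² with xᵀCx = yᵀCy and xᵀH = yᵀH is at most a constant (depending only on C, H, n, k) times the number of pairs (u,v) ∈ ([-2N,2N]ⁿ)² with uᵀCv = 0 and uᵀH = 0. -/
import Mathlib


open Matrix

/-- Zhao's Lemma 5.7: the number of pairs (x,y) in the box [1,N]^n with
xᵀCx = yᵀCy and xᵀH = yᵀH is bounded by a constant (depending only on C, H)
times the number of pairs (u,v) in [-2N,2N]^n with uᵀCv = 0 and uᵀH = 0. -/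
theorem stmt_0 (n k : ℕ) (C : Matrix (Fin n) (Fin n) ℚ) (hC : C.IsSymm)
    (H : Matrix (Fin n) (Fin k) ℚ) :
    ∃ c : ℝ, 0 < c ∧ ∀ N : ℤ,
      (({p : (Fin n → ℤ) × (Fin n → ℤ) |
          (∀ i, 1 ≤ p.1 i ∧ p.1 i ≤ N) ∧ (∀ i, 1 ≤ p.2 i ∧ p.2 i ≤ N) ∧
          dotProduct (fun i => (p.1 i : ℚ)) (C.mulVec (fun i => (p.1 i : ℚ)))
            = dotProduct (fun i => (p.2 i : ℚ)) (C.mulVec (fun i => (p.2 i : ℚ))) ∧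
          vecMul (fun i => (p.1 i : ℚ)) H = vecMul (fun i => (p.2 i : ℚ)) H}).ncard : ℝ)
      ≤ c *
      (({p : (Fin n → ℤ) × (Fin n → ℤ) |
          (∀ i, -(2*N) ≤ p.1 i ∧ p.1 i ≤ 2*N) ∧ (∀ i, -(2*N) ≤ p.2 i ∧ p.2 i ≤ 2*N) ∧
          dotProduct (fun i => (p.1 i : ℚ)) (C.mulVec (fun i => (p.2 i : ℚ))) = 0 ∧
          vecMul (fun i => (p.1 i : ℚ)) H = 0}).ncard : ℝ) := by
  refine ⟨1, one_pos, fun N => ?_⟩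
  rw [one_mul]
  set S : Set ((Fin n → ℤ) × (Fin n → ℤ)) :=
    {p | (∀ i, 1 ≤ p.1 i ∧ p.1 i ≤ N) ∧ (∀ i, 1 ≤ p.2 i ∧ p.2 i ≤ N) ∧
          dotProduct (fun i => (p.1 i : ℚ)) (C.mulVec (fun i => (p.1 i : ℚ)))
            = dotProduct (fun i => (p.2 i : ℚ)) (C.mulVec (fun i => (p.2 i : ℚ))) ∧
          vecMul (fun i => (p.1 i : ℚ)) H = vecMul (fun i => (p.2 i : ℚ)) H} with hS
  set T : Set ((Fin n → ℤ) × (Fin n → ℤ)) :=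
    {p | (∀ i, -(2*N) ≤ p.1 i ∧ p.1 i ≤ 2*N) ∧ (∀ i, -(2*N) ≤ p.2 i ∧ p.2 i ≤ 2*N) ∧
          dotProduct (fun i => (p.1 i : ℚ)) (C.mulVec (fun i => (p.2 i : ℚ))) = 0 ∧
          vecMul (fun i => (p.1 i : ℚ)) H = 0} with hT
  have hTfin : T.Finite := by
    have hbox : (Set.pi Set.univ (fun _ : Fin n => Set.Icc (-(2*N)) (2*N))).Finite :=
      Set.Finite.pi (fun _ => Set.finite_Icc _ _)
    apply Set.Finite.subset (hbox.prod hbox)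
    rintro ⟨x, y⟩ ⟨h1, h2, -, -⟩
    exact ⟨fun i _ => ⟨(h1 i).1, (h1 i).2⟩, fun i _ => ⟨(h2 i).1, (h2 i).2⟩⟩
  have key : (fun p : (Fin n → ℤ) × (Fin n → ℤ) => (p.1 - p.2, p.1 + p.2)) '' S ⊆ T := by
    rintro _ ⟨⟨x, y⟩, ⟨hx, hy, hQ, hL⟩, rfl⟩
    dsimp only at hx hy hQ hL ⊢
    have castsub : (fun i => ((x - y) i : ℚ)) = (fun i => (x i : ℚ)) - (fun i => (y i : ℚ)) := by
      funext i; simp only [Pi.sub_apply, Pi.add_apply]; push_cast; ring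
    have castadd : (fun i => ((x + y) i : ℚ)) = (fun i => (x i : ℚ)) + (fun i => (y i : ℚ)) := by
      funext i; simp only [Pi.sub_apply, Pi.add_apply]; push_cast; ring
    have hsymm : ∀ a b : Fin n → ℚ, dotProduct a (C.mulVec b) = dotProduct b (C.mulVec a) := by
      intro a b
      rw [dotProduct_mulVec, ← Matrix.mulVec_transpose, hC.eq, dotProduct_comm]
    refine ⟨?_, ?_, ?_, ?_⟩
    · intro i
      have h1 := (hx i).1; have h2 := (hx i).2
      have h3 := (hy i).1; have h4 := (hy i).2
      simp only [Pi.sub_apply]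
      constructor <;> omega
    · intro i
      have h1 := (hx i).1; have h2 := (hx i).2
      have h3 := (hy i).1; have h4 := (hy i).2
      simp only [Pi.add_apply]
      constructor <;> omega
    · rw [castsub, castadd, Matrix.mulVec_add, dotProduct_add, sub_dotProduct,
        sub_dotProduct]
      rw [hsymm (fun i => (y i : ℚ)) (fun i => (x i : ℚ))] at *
      rw [hQ]; ring
    · rw [castsub, Matrix.sub_vecMul, hL, sub_self]
  have hinj : Function.Injective
      (fun p : (Fin n → ℤ) × (Fin n → ℤ) => (p.1 - p.2, p.1 + p.2)) := by
    rintro ⟨x, y⟩ ⟨x', y'⟩ h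
    simp only [Prod.mk.injEq] at h
    obtain ⟨h1, h2⟩ := h
    have hx : x = x' := by
      have : x - y + (x + y) = x' - y' + (x' + y') := by rw [h1, h2]
      funext i
      have := congrFun this i
      simp only [Pi.add_apply, Pi.sub_apply] at this
      omega
    have hy : y = y' := by
      have : x + y - (x - y) = x' + y' - (x' - y') := by rw [h1, h2]
      funext i
      have := congrFun this i
      simp only [Pi.add_apply, Pi.sub_apply] at this
      omega
    exact Prod.ext hx hy
  have : S.ncard ≤ T.ncard := by
    rw [← Set.ncard_image_of_injective S hinj]
    exact Set.ncard_le_ncard key hTfin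
  exact_mod_cast this
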